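/- With x_0 as above, every element of F(N) can be written as f · x_0^{-n} for some f ∈ D and n ∈ ℤ, and the map (f, n) ↦ f x_0^{-n} is a group isomorphism from the semidirect product D ⋊_α ℤ onto F(N), where α(n)(f) = x_0^n f x_0^{-n}. -/

import Mathlib

open Set

noncomputable section

/-- `d` is an `N`-adic rational: of the form `a / N ^ k`. -/
def NAdic (N : ℕ) (d : ℝ) : Prop := ∃ a k : ℕ, d = (a : ℝ) / (N : ℝ) ^ k

/-- Membership in the generalized Thompson group `F(N)`, modeled as permutations of `ℝ`
that are the identity outside `[0,1]`: continuous, strictly increasing, fixing `0` and `1`,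
differentiable except at finitely many `N`-adic points of `[0,1]`, with derivatives
integer powers of `N`. -/
def InFN (N : ℕ) (f : Equiv.Perm ℝ) : Prop :=
  Continuous f ∧ StrictMono f ∧
  (∀ x : ℝ, x ∉ Icc (0:ℝ) 1 → f x = x) ∧
  f 0 = 0 ∧ f 1 = 1 ∧
  ∃ s : Finset ℝ, (∀ x ∈ s, x ∈ Icc (0:ℝ) 1 ∧ NAdic N x) ∧
    ∀ x ∈ Icc (0:ℝ) 1, x ∉ s → ∃ m : ℤ, HasDerivAt (⇑f) ((N : ℝ) ^ m) x

/-- Membership in `F' ⊆ F(N)`: elements that are the identity near both `0` and `1`. -/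
def InF' (N : ℕ) (f : Equiv.Perm ℝ) : Prop :=
  InFN N f ∧ ∃ ε δ : ℝ, 0 < ε ∧ ε < 1 ∧ 0 < δ ∧ δ < 1 ∧
    (∀ x ∈ Icc (0:ℝ) ε, f x = x) ∧ (∀ x ∈ Icc δ (1:ℝ), f x = x)

/-- Membership in `D ⊆ F(N)`: elements that are the identity near `1`. -/
def InD (N : ℕ) (f : Equiv.Perm ℝ) : Prop :=
  InFN N f ∧ ∃ δ : ℝ, 0 < δ ∧ δ < 1 ∧ ∀ x ∈ Icc δ (1:ℝ), f x = x

/-- The piecewise linear map `A_{d,p}`. -/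
def A (N : ℕ) (d : ℝ) (p : ℤ) (x : ℝ) : ℝ :=
  if x ≤ d then x / (N : ℝ) ^ p
  else if x ≤ 1 - d / (N : ℝ) ^ p then x - d + d / (N : ℝ) ^ p
  else (N : ℝ) ^ p * x + 1 - (N : ℝ) ^ p

section NadicHelpers
variable {N : ℕ}

lemma hNR1 (hN : 2 ≤ N) : (1:ℝ) < (N:ℝ) := by
  have : (2:ℝ) ≤ (N:ℝ) := by exact_mod_cast hN
  linarith

lemma hNRpos (hN : 2 ≤ N) : (0:ℝ) < (N:ℝ) := lt_trans one_pos (hNR1 hN)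

lemma hNR0 (hN : 2 ≤ N) : (N:ℝ) ≠ 0 := ne_of_gt (hNRpos hN)

lemma nadic_zero : NAdic N 0 := ⟨0, 0, by simp⟩
lemma nadic_one : NAdic N 1 := ⟨1, 0, by simp⟩

lemma nadic_add (hN : 2 ≤ N) {x y : ℝ} (hx : NAdic N x) (hy : NAdic N y) :
    NAdic N (x + y) := by
  obtain ⟨a, k, rfl⟩ := hx; obtain ⟨b, j, rfl⟩ := hy
  have h0 : (N:ℝ) ≠ 0 := hNR0 hN
  refine ⟨a * N ^ j + b * N ^ k, k + j, ?_⟩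
  push_cast
  field_simp
  ring

lemma nadic_sub (hN : 2 ≤ N) {x y : ℝ} (hyx : y ≤ x) (hx : NAdic N x) (hy : NAdic N y) :
    NAdic N (x - y) := by
  obtain ⟨a, k, rfl⟩ := hx; obtain ⟨b, j, rfl⟩ := hy
  have h0 : (N:ℝ) ≠ 0 := hNR0 hN
  have hpk : (0:ℝ) < (N:ℝ) ^ k := pow_pos (hNRpos hN) k
  have hpj : (0:ℝ) < (N:ℝ) ^ j := pow_pos (hNRpos hN) j
  have hle : b * N ^ k ≤ a * N ^ j := by
    have := (div_le_div_iff₀ hpj hpk).1 hyx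
    exact_mod_cast this
  refine ⟨a * N ^ j - b * N ^ k, k + j, ?_⟩
  have hcast : ((a * N ^ j - b * N ^ k : ℕ) : ℝ) = (a:ℝ) * N ^ j - (b:ℝ) * N ^ k := by
    rw [Nat.cast_sub hle]; push_cast; ring
  rw [hcast]
  field_simp
  ring

lemma nadic_zpow_mul (hN : 2 ≤ N) (m : ℤ) {x : ℝ} (hx : NAdic N x) :
    NAdic N ((N:ℝ) ^ m * x) := by
  obtain ⟨a, k, rfl⟩ := hx
  have h0 : (N:ℝ) ≠ 0 := hNR0 hN
  rcases le_or_gt 0 m with hm | hm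
  · lift m to ℕ using hm
    refine ⟨a * N ^ m, k, ?_⟩
    rw [zpow_natCast]
    push_cast
    ring
  · obtain ⟨q, rfl⟩ : ∃ q : ℕ, m = -(q:ℤ) := ⟨(-m).toNat, by omega⟩
    refine ⟨a, k + q, ?_⟩
    rw [zpow_neg, zpow_natCast]
    push_cast
    rw [pow_add]
    field_simp

end NadicHelpers

section Affine
variable {N : ℕ}

/-- Darboux: the power-of-N derivative is constant on an open interval. -/
lemma slope_const (hN : 2 ≤ N) {g : ℝ → ℝ} {u v : ℝ}
    (hd : ∀ x ∈ Ioo u v, ∃ m : ℤ, HasDerivAt g ((N:ℝ) ^ m) x) :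
    ∃ m : ℤ, ∀ x ∈ Ioo u v, HasDerivAt g ((N:ℝ) ^ m) x := by
  have hN1 : (1:ℝ) < (N:ℝ) := hNR1 hN
  rcases isEmpty_or_nonempty (Ioo u v) with he | hne
  · exact ⟨0, fun x hx => absurd (⟨x, hx⟩ : Nonempty (Ioo u v)) (not_nonempty_iff.2 he)⟩
  obtain ⟨⟨c, hc⟩⟩ := hne
  obtain ⟨m, hm⟩ := hd c hc
  -- auxiliary: no two different slopes can occur
  have key : ∀ x ∈ Ioo u v, ∀ y ∈ Ioo u v, ∀ mx my : ℤ,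
      HasDerivAt g ((N:ℝ) ^ mx) x → HasDerivAt g ((N:ℝ) ^ my) y →
      (N:ℝ) ^ mx < (N:ℝ) ^ my → False := by
    intro x hx y hy mx my hdx hdy hlt
    have hmxy : mx < my := (zpow_right_strictMono₀ hN1).lt_iff_lt.1 hlt
    have hderivs : ∀ z ∈ Icc (min x y) (max x y),
        HasDerivWithinAt g (deriv g z) (Icc (min x y) (max x y)) z := by
      intro z hz
      have hz' : z ∈ Ioo u v := by
        constructor
        · exact lt_of_lt_of_le (lt_min hx.1 hy.1) hz.1
        · exact lt_of_le_of_lt hz.2 (max_lt hx.2 hy.2)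
      obtain ⟨mz, hmz⟩ := hd z hz'
      rw [hmz.deriv]
      exact hmz.hasDerivWithinAt
    set t : ℝ := ((N:ℝ) ^ mx + (N:ℝ) ^ (mx + 1)) / 2 with ht
    have h1 : (N:ℝ) ^ mx < (N:ℝ) ^ (mx + 1) := zpow_lt_zpow_right₀ hN1 (by omega)
    have ht1 : (N:ℝ) ^ mx < t := by rw [ht]; linarith
    have ht2 : t < (N:ℝ) ^ (mx + 1) := by rw [ht]; linarith
    have ht3 : t < (N:ℝ) ^ my := lt_of_lt_of_le ht2 (by
      rcases eq_or_lt_of_le (by omega : mx + 1 ≤ my) with h | h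
      · rw [h]
      · exact le_of_lt (zpow_lt_zpow_right₀ hN1 h))
    have hdxv : deriv g x = (N:ℝ) ^ mx := hdx.deriv
    have hdyv : deriv g y = (N:ℝ) ^ my := hdy.deriv
    have hmem : t ∈ deriv g '' Ioo (min x y) (max x y) := by
      rcases le_total x y with hxy | hxy
      · rw [min_eq_left hxy, max_eq_right hxy] at hderivs ⊢
        exact exists_hasDerivWithinAt_eq_of_gt_of_lt hxy hderivs
          (by rw [hdxv]; exact ht1) (by rw [hdyv]; exact ht3)
      · rw [min_eq_right hxy, max_eq_left hxy] at hderivs ⊢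
        exact exists_hasDerivWithinAt_eq_of_lt_of_gt hxy hderivs
          (by rw [hdyv]; exact ht3) (by rw [hdxv]; exact ht1)
    obtain ⟨z, hzmem, hzt⟩ := hmem
    have hz' : z ∈ Ioo u v := by
      constructor
      · exact lt_of_lt_of_le (lt_min hx.1 hy.1) (le_of_lt hzmem.1)
      · exact lt_of_le_of_lt (le_of_lt hzmem.2) (max_lt hx.2 hy.2)
    obtain ⟨mz, hmz⟩ := hd z hz'
    have : (N:ℝ) ^ mz = t := by rw [← hmz.deriv, hzt]
    have h4 : mx < mz := (zpow_right_strictMono₀ hN1).lt_iff_lt.1 (by rw [this]; exact ht1)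
    have h5 : mz < mx + 1 := (zpow_right_strictMono₀ hN1).lt_iff_lt.1 (by rw [this]; exact ht2)
    omega
  refine ⟨m, fun x hx => ?_⟩
  obtain ⟨mx, hmx⟩ := hd x hx
  rcases lt_trichotomy ((N:ℝ) ^ mx) ((N:ℝ) ^ m) with h | h | h
  · exact absurd (key x hx c hc mx m hmx hm h) not_false
  · rwa [← h]
  · exact absurd (key c hc x hx m mx hm hmx h) not_false

/-- On a gap with power-of-N derivatives everywhere in the interior, g is affine. -/
lemma gap_affine (hN : 2 ≤ N) {g : ℝ → ℝ} (hc : Continuous g) {u v : ℝ} (huv : u < v)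
    (hd : ∀ x ∈ Ioo u v, ∃ m : ℤ, HasDerivAt g ((N:ℝ) ^ m) x) :
    ∃ m : ℤ, ∀ x ∈ Icc u v, g x = g u + (N:ℝ) ^ m * (x - u) := by
  obtain ⟨m, hm⟩ := slope_const hN hd
  set h : ℝ → ℝ := fun x => g x - (N:ℝ) ^ m * x with hh
  have hhc : Continuous h := hc.sub (continuous_const.mul continuous_id)
  have hconst : ∀ x ∈ Ioo u v, ∀ y ∈ Ioo u v, x ≤ y → h y = h x := by
    intro x hx y hy hxy
    have hcont : ContinuousOn h (Icc x y) := hhc.continuousOn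
    have hderiv : ∀ z ∈ Ico x y, HasDerivWithinAt h 0 (Ici z) z := by
      intro z hz
      have hz' : z ∈ Ioo u v := ⟨lt_of_lt_of_le hx.1 hz.1, lt_trans hz.2 hy.2⟩
      have := (hm z hz').sub (((hasDerivAt_id z).const_mul ((N:ℝ) ^ m)))
      simp only [mul_one] at this
      rw [sub_self] at this
      exact this.hasDerivWithinAt
    exact constant_of_has_deriv_right_zero hcont hderiv y ⟨hxy, le_refl y⟩
  set c : ℝ := (u + v) / 2 with hcdef
  have hcmem : c ∈ Ioo u v := ⟨by rw [hcdef]; linarith, by rw [hcdef]; linarith⟩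
  have heq : EqOn h (fun _ => h c) (Ioo u v) := by
    intro x hx
    rcases le_total x c with hxc | hxc
    · exact (hconst x hx c hcmem hxc).symm ▸ rfl
    · exact hconst c hcmem x hx hxc
  have heq2 : EqOn h (fun _ => h c) (Icc u v) := by
    have := heq.closure hhc continuous_const
    rwa [closure_Ioo (ne_of_lt huv)] at this
  refine ⟨m, fun x hx => ?_⟩
  have h1 : h x = h c := heq2 hx
  have h2 : h u = h c := heq2 ⟨le_refl u, le_of_lt huv⟩
  have : h x = h u := by rw [h1, h2]
  rw [hh] at this
  simp only at this
  linarith [this]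

end Affine

section Perm
variable {N : ℕ}

lemma perm_symm_strictMono {g : Equiv.Perm ℝ} (h : StrictMono g) : StrictMono g.symm := by
  intro a b hab
  rcases lt_trichotomy (g.symm a) (g.symm b) with h' | h' | h'
  · exact h'
  · exfalso
    have : a = b := by
      have := congrArg g h'
      simpa using this
    exact lt_irrefl a (this ▸ hab)
  · exfalso
    have := h h'
    simp only [Equiv.apply_symm_apply] at this
    exact lt_irrefl a (lt_trans hab this)

lemma perm_symm_continuous {g : Equiv.Perm ℝ} (hc : Continuous g) (hm : StrictMono g) :
    Continuous ⇑g.symm := by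
  let e : ℝ ≃o ℝ := StrictMono.orderIsoOfSurjective ⇑g hm g.surjective
  have hco : ⇑g.symm = ⇑e.symm := by
    funext y
    symm
    rw [OrderIso.symm_apply_eq]
    show y = (StrictMono.orderIsoOfSurjective ⇑g hm g.surjective) (g.symm y)
    rw [StrictMono.coe_orderIsoOfSurjective]
    simp
  rw [hco]
  exact OrderIso.continuous e.symm

lemma perm_maps_Icc {g : Equiv.Perm ℝ} (hm : StrictMono g) (h0 : g 0 = 0) (h1 : g 1 = 1)
    {x : ℝ} (hx : x ∈ Icc (0:ℝ) 1) : g x ∈ Icc (0:ℝ) 1 := by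
  constructor
  · rw [← h0]; exact hm.monotone hx.1
  · rw [← h1]; exact hm.monotone hx.2

lemma perm_symm_maps_Icc {g : Equiv.Perm ℝ} (hm : StrictMono g) (h0 : g 0 = 0) (h1 : g 1 = 1)
    {x : ℝ} (hx : x ∈ Icc (0:ℝ) 1) : g.symm x ∈ Icc (0:ℝ) 1 := by
  have hsm := perm_symm_strictMono hm
  have hs0 : g.symm 0 = 0 := by rw [Equiv.symm_apply_eq, h0]
  have hs1 : g.symm 1 = 1 := by rw [Equiv.symm_apply_eq, h1]
  constructor
  · rw [← hs0]; exact hsm.monotone hx.1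
  · rw [← hs1]; exact hsm.monotone hx.2

/-- Elements of `F(N)` map `N`-adic points of `[0,1]` to `N`-adic points. -/
lemma image_nadic (hN : 2 ≤ N) {g : Equiv.Perm ℝ} (hg : InFN N g) {d : ℝ}
    (hd : NAdic N d) (hdI : d ∈ Icc (0:ℝ) 1) : NAdic N (g d) := by
  classical
  obtain ⟨hc, hm, _, h0, h1, s, hs, hder⟩ := hg
  have H : ∀ n : ℕ, ∀ d : ℝ, NAdic N d → d ∈ Icc (0:ℝ) 1 →
      (s.filter (fun z => z < d)).card = n → NAdic N (g d) := by
    intro n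
    induction n using Nat.strong_induction_on with
    | _ n ih =>
      intro d hd hdI hcard
      rcases eq_or_lt_of_le hdI.1 with hd0 | hd0
      · rw [← hd0, h0]; exact nadic_zero
      -- u := the largest breakpoint below d (or 0)
      set T := s.filter (fun z => z < d) with hT
      set u := (insert (0:ℝ) T).max' ⟨0, Finset.mem_insert_self _ _⟩ with hu
      have humem := Finset.max'_mem (insert (0:ℝ) T) ⟨0, Finset.mem_insert_self _ _⟩
      rw [← hu] at humem
      have hult : u < d := by
        rcases Finset.mem_insert.1 humem with h | h
        · rw [h]; exact hd0
        · exact (Finset.mem_filter.1 h).2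
      have hu0 : 0 ≤ u := Finset.le_max' _ 0 (Finset.mem_insert_self _ _)
      have hgap : ∀ x ∈ Ioo u d, ∃ m : ℤ, HasDerivAt (⇑g) ((N:ℝ) ^ m) x := by
        intro x hx
        have hxI : x ∈ Icc (0:ℝ) 1 := ⟨le_of_lt (lt_of_le_of_lt hu0 hx.1),
          le_trans (le_of_lt hx.2) hdI.2⟩
        have hxs : x ∉ s := by
          intro hxs
          have : x ∈ T := Finset.mem_filter.2 ⟨hxs, hx.2⟩
          have := Finset.le_max' (insert (0:ℝ) T) x (Finset.mem_insert_of_mem this)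
          rw [← hu] at this
          exact absurd hx.1 (not_lt.2 this)
        exact hder x hxI hxs
      obtain ⟨m, hmf⟩ := gap_affine hN hc hult hgap
      have hgd : g d = g u + (N:ℝ) ^ m * (d - u) := hmf d ⟨le_of_lt hult, le_refl d⟩
      -- properties of u
      have hunadic : NAdic N u ∧ NAdic N (g u) := by
        rcases Finset.mem_insert.1 humem with h | h
        · rw [h, h0]; exact ⟨nadic_zero, nadic_zero⟩
        · have hus : u ∈ s := (Finset.mem_filter.1 h).1
          have huN : NAdic N u := (hs u hus).2
          have huI : u ∈ Icc (0:ℝ) 1 := (hs u hus).1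
          refine ⟨huN, ?_⟩
          have hssub : s.filter (fun z => z < u) ⊂ T := by
            constructor
            · intro z hz
              have := Finset.mem_filter.1 hz
              exact Finset.mem_filter.2 ⟨this.1, lt_trans this.2 hult⟩
            · intro hsub
              have : u ∈ T := Finset.mem_filter.2 ⟨hus, hult⟩
              have := Finset.mem_filter.1 (hsub this)
              exact lt_irrefl u this.2
          have hlt : (s.filter (fun z => z < u)).card < n := by
            rw [← hcard]; exact Finset.card_lt_card hssub
          exact ih _ hlt u huN huI rfl
      rw [hgd]
      exact nadic_add hN hunadic.2
        (nadic_zpow_mul hN m (nadic_sub hN (le_of_lt hult) hd hunadic.1))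
  exact H _ d hd hdI rfl

/-- `g⁻¹` also maps `N`-adic points of `[0,1]` to `N`-adic points. -/
lemma symm_nadic (hN : 2 ≤ N) {g : Equiv.Perm ℝ} (hg : InFN N g) {y : ℝ}
    (hy : NAdic N y) (hyI : y ∈ Icc (0:ℝ) 1) : NAdic N (g.symm y) := by
  classical
  obtain ⟨hc, hm, hout, h0, h1, s, hs, hder⟩ := hg
  set x := g.symm y with hxdef
  have hgx : g x = y := by rw [hxdef]; simp
  have hxI : x ∈ Icc (0:ℝ) 1 := perm_symm_maps_Icc hm h0 h1 hyI
  by_cases hxs : x ∈ s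
  · exact (hs x hxs).2
  rcases eq_or_lt_of_le hxI.1 with hx0 | hx0
  · rw [← hx0]; exact nadic_zero
  rcases eq_or_lt_of_le hxI.2 with hx1 | hx1
  · rw [hx1]; exact nadic_one
  set T₁ := s.filter (fun z => z < x) with hT1
  set T₂ := s.filter (fun z => x < z) with hT2
  set u := (insert (0:ℝ) T₁).max' ⟨0, Finset.mem_insert_self _ _⟩ with hu
  set v := (insert (1:ℝ) T₂).min' ⟨1, Finset.mem_insert_self _ _⟩ with hv
  have humem := Finset.max'_mem (insert (0:ℝ) T₁) ⟨0, Finset.mem_insert_self _ _⟩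
  have hvmem := Finset.min'_mem (insert (1:ℝ) T₂) ⟨1, Finset.mem_insert_self _ _⟩
  rw [← hu] at humem; rw [← hv] at hvmem
  have hult : u < x := by
    rcases Finset.mem_insert.1 humem with h | h
    · rw [h]; exact hx0
    · exact (Finset.mem_filter.1 h).2
  have hvgt : x < v := by
    rcases Finset.mem_insert.1 hvmem with h | h
    · rw [h]; exact hx1
    · exact (Finset.mem_filter.1 h).2
  have hu0 : 0 ≤ u := Finset.le_max' _ 0 (Finset.mem_insert_self _ _)
  have hv1 : v ≤ 1 := Finset.min'_le _ 1 (Finset.mem_insert_self _ _)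
  have huv : u < v := lt_trans hult hvgt
  have hgap : ∀ z ∈ Ioo u v, ∃ m : ℤ, HasDerivAt (⇑g) ((N:ℝ) ^ m) z := by
    intro z hz
    have hzI : z ∈ Icc (0:ℝ) 1 := ⟨le_of_lt (lt_of_le_of_lt hu0 hz.1),
      le_trans (le_of_lt hz.2) hv1⟩
    have hzs : z ∉ s := by
      intro hzs
      rcases lt_trichotomy z x with h | h | h
      · have : z ∈ T₁ := Finset.mem_filter.2 ⟨hzs, h⟩
        have := Finset.le_max' (insert (0:ℝ) T₁) z (Finset.mem_insert_of_mem this)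
        rw [← hu] at this
        exact absurd hz.1 (not_lt.2 this)
      · exact hxs (h ▸ hzs)
      · have : z ∈ T₂ := Finset.mem_filter.2 ⟨hzs, h⟩
        have := Finset.min'_le (insert (1:ℝ) T₂) z (Finset.mem_insert_of_mem this)
        rw [← hv] at this
        exact absurd hz.2 (not_lt.2 this)
    exact hder z hzI hzs
  obtain ⟨m, hmf⟩ := gap_affine hN hc huv hgap
  have hfx : g x = g u + (N:ℝ) ^ m * (x - u) := hmf x ⟨le_of_lt hult, le_of_lt hvgt⟩
  -- x = u + N^(-m) * (y - g u)
  have hNm : (0:ℝ) < (N:ℝ) ^ m := zpow_pos (hNRpos hN) m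
  have hxe : x = u + (N:ℝ) ^ (-m) * (y - g u) := by
    rw [← hgx, hfx]
    rw [zpow_neg]
    field_simp
    ring
  have hguI : u ∈ Icc (0:ℝ) 1 := ⟨hu0, le_trans (le_of_lt hult) hxI.2⟩
  have hunadic : NAdic N u := by
    rcases Finset.mem_insert.1 humem with h | h
    · rw [h]; exact nadic_zero
    · exact (hs u (Finset.mem_filter.1 h).1).2
  have hgu_nadic : NAdic N (g u) := image_nadic hN ⟨hc, hm, hout, h0, h1, s, hs, hder⟩ hunadic hguI
  have hguy : g u ≤ y := by
    rw [← hgx]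
    exact hm.monotone (le_of_lt hult)
  rw [hxe]
  exact nadic_add hN hunadic (nadic_zpow_mul hN (-m) (nadic_sub hN hguy hy hgu_nadic))

end Perm

section Closure
variable {N : ℕ}

lemma inFN_one : InFN N 1 := by
  refine ⟨continuous_id, fun a b h => h, fun x _ => rfl, rfl, rfl, ∅, by simp, ?_⟩
  intro x _ _
  exact ⟨0, by simpa using hasDerivAt_id x⟩

lemma inFN_mul (hN : 2 ≤ N) {f g : Equiv.Perm ℝ} (hf : InFN N f) (hg : InFN N g) :
    InFN N (f * g) := by
  classical
  obtain ⟨hfc, hfm, hfo, hf0, hf1, sf, hsf, hderf⟩ := hf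
  obtain ⟨hgc, hgm, hgo, hg0, hg1, sg, hsg, hderg⟩ := hg
  have hcoe : ⇑(f * g) = ⇑f ∘ ⇑g := rfl
  refine ⟨by rw [hcoe]; exact hfc.comp hgc, by rw [hcoe]; exact hfm.comp hgm,
    ?_, ?_, ?_, sg ∪ sf.image (⇑g.symm), ?_, ?_⟩
  · intro x hx
    show f (g x) = x
    rw [hgo x hx, hfo x hx]
  · show f (g 0) = 0
    rw [hg0, hf0]
  · show f (g 1) = 1
    rw [hg1, hf1]
  · intro x hx
    rcases Finset.mem_union.1 hx with h | h
    · exact hsg x h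
    · obtain ⟨y, hy, rfl⟩ := Finset.mem_image.1 h
      have hInG : InFN N g := ⟨hgc, hgm, hgo, hg0, hg1, sg, hsg, hderg⟩
      exact ⟨perm_symm_maps_Icc hgm hg0 hg1 (hsf y hy).1,
        symm_nadic hN hInG (hsf y hy).2 (hsf y hy).1⟩
  · intro x hxI hxs
    have hxsg : x ∉ sg := fun h => hxs (Finset.mem_union.2 (Or.inl h))
    obtain ⟨k, hk⟩ := hderg x hxI hxsg
    have hgxI : g x ∈ Icc (0:ℝ) 1 := perm_maps_Icc hgm hg0 hg1 hxI
    have hgxsf : g x ∉ sf := by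
      intro h
      apply hxs
      refine Finset.mem_union.2 (Or.inr (Finset.mem_image.2 ⟨g x, h, ?_⟩))
      simp
    obtain ⟨j, hj⟩ := hderf (g x) hgxI hgxsf
    refine ⟨j + k, ?_⟩
    have := HasDerivAt.comp x hj hk
    rw [hcoe]
    rwa [zpow_add₀ (hNR0 hN)]

lemma inFN_inv (hN : 2 ≤ N) {g : Equiv.Perm ℝ} (hg : InFN N g) : InFN N g⁻¹ := by
  classical
  obtain ⟨hgc, hgm, hgo, hg0, hg1, sg, hsg, hderg⟩ := hg
  have hInG : InFN N g := ⟨hgc, hgm, hgo, hg0, hg1, sg, hsg, hderg⟩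
  have hcoe : ⇑(g⁻¹) = ⇑g.symm := rfl
  refine ⟨by rw [hcoe]; exact perm_symm_continuous hgc hgm,
    by rw [hcoe]; exact perm_symm_strictMono hgm, ?_, ?_, ?_, sg.image ⇑g, ?_, ?_⟩
  · intro x hx
    show g.symm x = x
    rw [Equiv.symm_apply_eq, hgo x hx]
  · show g.symm 0 = 0
    rw [Equiv.symm_apply_eq, hg0]
  · show g.symm 1 = 1
    rw [Equiv.symm_apply_eq, hg1]
  · intro x hx
    obtain ⟨y, hy, rfl⟩ := Finset.mem_image.1 hx
    exact ⟨perm_maps_Icc hgm hg0 hg1 (hsg y hy).1,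
      image_nadic hN hInG (hsg y hy).2 (hsg y hy).1⟩
  · intro y hyI hys
    set x := g.symm y with hxdef
    have hgx : g x = y := by rw [hxdef]; simp
    have hxI : x ∈ Icc (0:ℝ) 1 := perm_symm_maps_Icc hgm hg0 hg1 hyI
    have hxs : x ∉ sg := by
      intro h
      exact hys (Finset.mem_image.2 ⟨x, h, hgx⟩)
    obtain ⟨m, hm⟩ := hderg x hxI hxs
    refine ⟨-m, ?_⟩
    have hcont : ContinuousAt (⇑g.symm) y := (perm_symm_continuous hgc hgm).continuousAt
    have hne : ((N:ℝ) ^ m) ≠ 0 := ne_of_gt (zpow_pos (hNRpos hN) m)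
    have hev : ∀ᶠ z in nhds y, g (g.symm z) = z :=
      Filter.Eventually.of_forall (fun z => by simp)
    have := HasDerivAt.of_local_left_inverse hcont (by exact hm) hne hev
    rw [hcoe, zpow_neg]
    exact this

lemma inFN_zpow (hN : 2 ≤ N) {g : Equiv.Perm ℝ} (hg : InFN N g) (n : ℤ) :
    InFN N (g ^ n) := by
  have hnat : ∀ k : ℕ, InFN N (g ^ k) := by
    intro k
    induction k with
    | zero => simpa using (inFN_one : InFN N 1)
    | succ k ih => rw [pow_succ]; exact inFN_mul hN ih hg
  rcases le_or_gt 0 n with hn | hn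
  · lift n to ℕ using hn
    rw [zpow_natCast]
    exact hnat n
  · obtain ⟨q, rfl⟩ : ∃ q : ℕ, n = -(q:ℤ) := ⟨(-n).toNat, by omega⟩
    rw [zpow_neg, zpow_natCast]
    exact inFN_inv hN (hnat q)

end Closure

section Near
variable {N : ℕ}

/-- Any element of `F(N)` is affine with slope a power of `N` near `1`. -/
lemma near_one (hN : 2 ≤ N) {g : Equiv.Perm ℝ} (hg : InFN N g) :
    ∃ M : ℤ, ∃ a : ℝ, a < 1 ∧ ∀ x ∈ Icc a 1, g x = (N:ℝ) ^ M * (x - 1) + 1 := by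
  classical
  obtain ⟨hc, hm, _, h0, h1, s, hs, hder⟩ := hg
  set T := s.filter (fun z => z < 1) with hT
  set u := (insert (0:ℝ) T).max' ⟨0, Finset.mem_insert_self _ _⟩ with hu
  have humem := Finset.max'_mem (insert (0:ℝ) T) ⟨0, Finset.mem_insert_self _ _⟩
  rw [← hu] at humem
  have hu1 : u < 1 := by
    rcases Finset.mem_insert.1 humem with h | h
    · rw [h]; exact one_pos
    · exact (Finset.mem_filter.1 h).2
  have hu0 : 0 ≤ u := Finset.le_max' _ 0 (Finset.mem_insert_self _ _)
  have hgap : ∀ x ∈ Ioo u 1, ∃ m : ℤ, HasDerivAt (⇑g) ((N:ℝ) ^ m) x := by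
    intro x hx
    have hxI : x ∈ Icc (0:ℝ) 1 := ⟨le_of_lt (lt_of_le_of_lt hu0 hx.1), le_of_lt hx.2⟩
    have hxs : x ∉ s := by
      intro hxs
      have : x ∈ T := Finset.mem_filter.2 ⟨hxs, hx.2⟩
      have := Finset.le_max' (insert (0:ℝ) T) x (Finset.mem_insert_of_mem this)
      rw [← hu] at this
      exact absurd hx.1 (not_lt.2 this)
    exact hder x hxI hxs
  obtain ⟨m, hmf⟩ := gap_affine hN hc hu1 hgap
  have hat1 : (1:ℝ) = g u + (N:ℝ) ^ m * (1 - u) := by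
    rw [← hmf 1 ⟨le_of_lt hu1, le_refl 1⟩, h1]
  refine ⟨m, u, hu1, fun x hx => ?_⟩
  have := hmf x hx
  rw [this]
  linarith [hat1]

/-- Near `1`, `x₀ ^ n` is `x ↦ N^n (x-1) + 1`. -/
lemma x0_pow_formula (hN : 2 ≤ N) (x₀ : Equiv.Perm ℝ) {θ₁ : ℝ} (hθ₁ : θ₁ < 1)
    (hx₁ : ∀ x ∈ Icc θ₁ 1, x₀ x = N * x + 1 - N) (n : ℤ) :
    ∃ θ : ℝ, θ < 1 ∧ ∀ x ∈ Icc θ 1, (x₀ ^ n) x = (N:ℝ) ^ n * (x - 1) + 1 := by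
  have hNpos : (0:ℝ) < N := hNRpos hN
  have hN1 : (1:ℝ) < N := hNR1 hN
  -- the inverse near 1
  have hinv : ∀ y ∈ Icc ((N:ℝ) * θ₁ + 1 - N) 1, x₀⁻¹ y = (y - 1) / N + 1 := by
    intro y hy
    set z := (y - 1) / N + 1 with hz
    have hz1 : z ≤ 1 := by
      rw [hz]
      have : (y - 1) / N ≤ 0 := div_nonpos_of_nonpos_of_nonneg (by linarith [hy.2]) (le_of_lt hNpos)
      linarith
    have hzθ : θ₁ ≤ z := by
      rw [hz, ← sub_le_iff_le_add, le_div_iff₀ hNpos]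
      nlinarith [hy.1]
    have hxz : x₀ z = y := by
      rw [hx₁ z ⟨hzθ, hz1⟩, hz]
      field_simp
      ring
    rw [← hxz]
    simp
  refine Int.induction_on n ⟨0, zero_lt_one, ?_⟩ ?_ ?_
  · intro x _
    rw [zpow_zero, zpow_zero]
    simp
  · rintro i ⟨θn, hθn, hfn⟩
    refine ⟨max θ₁ ((θn - 1) / N + 1), ?_, ?_⟩
    · apply max_lt hθ₁
      have : (θn - 1) / N < 0 := div_neg_of_neg_of_pos (by linarith) hNpos
      linarith
    · intro x hx
      have hxθ₁ : θ₁ ≤ x := le_trans (le_max_left _ _) hx.1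
      have hxθn : (θn - 1) / N + 1 ≤ x := le_trans (le_max_right _ _) hx.1
      have hx1 : x ≤ 1 := hx.2
      have hw : x₀ x = (N:ℝ) * (x - 1) + 1 := by
        rw [hx₁ x ⟨hxθ₁, hx1⟩]; ring
      have hwmem : (N:ℝ) * (x - 1) + 1 ∈ Icc θn 1 := by
        constructor
        · rw [div_add' _ _ _ (ne_of_gt hNpos), div_le_iff₀ hNpos] at hxθn
          nlinarith
        · nlinarith
      have : (x₀ ^ ((i:ℤ) + 1)) x = (x₀ ^ (i:ℤ)) (x₀ x) := by
        rw [zpow_add_one]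
        rfl
      rw [this, hw, hfn _ hwmem, zpow_add_one₀ (hNR0 hN)]
      ring
  · rintro i ⟨θn, hθn, hfn⟩
    refine ⟨max ((N:ℝ) * θ₁ + 1 - N) θn, ?_, ?_⟩
    · apply max_lt _ hθn
      nlinarith
    · intro x hx
      have hxφ : (N:ℝ) * θ₁ + 1 - N ≤ x := le_trans (le_max_left _ _) hx.1
      have hxθn : θn ≤ x := le_trans (le_max_right _ _) hx.1
      have hx1 : x ≤ 1 := hx.2
      have hw : x₀⁻¹ x = (x - 1) / N + 1 := hinv x ⟨hxφ, hx1⟩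
      have hwmem : (x - 1) / N + 1 ∈ Icc θn 1 := by
        constructor
        · have : x - 1 ≤ (x - 1) / N := by
            rw [le_div_iff₀ hNpos]
            nlinarith
          linarith
        · have : (x - 1) / N ≤ 0 := div_nonpos_of_nonpos_of_nonneg (by linarith) (le_of_lt hNpos)
          linarith
      have : (x₀ ^ (-(i:ℤ) - 1)) x = (x₀ ^ (-(i:ℤ))) (x₀⁻¹ x) := by
        rw [zpow_sub_one]
        rfl
      rw [this, hw, hfn _ hwmem, zpow_sub_one₀ (hNR0 hN)]
      field_simp
      ring

end Near

/-- every element of `F(N)` is uniquely `f · x₀⁻ⁿ` with `f ∈ D`, `n ∈ ℤ`, all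
such products lie in `F(N)`, and the map `(f, n) ↦ f x₀⁻ⁿ` intertwines the semidirect
product multiplication (with the conjugation action) with multiplication in `F(N)`. -/
theorem stmt16 (N : ℕ) (hN : 2 ≤ N) (x₀ : Equiv.Perm ℝ) (hx₀ : InFN N x₀)
    (h0 : ∃ η > (0:ℝ), ∀ x ∈ Icc (0:ℝ) η, x₀ x = x)
    (h1 : ∃ θ < (1:ℝ), ∀ x ∈ Icc θ (1:ℝ), x₀ x = N * x + 1 - N) :
    (∀ (f : Equiv.Perm ℝ) (n : ℤ), InD N f → InFN N (f * x₀ ^ (-n))) ∧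
    (∀ g : Equiv.Perm ℝ, InFN N g →
      ∃! q : Equiv.Perm ℝ × ℤ, InD N q.1 ∧ g = q.1 * x₀ ^ (-q.2)) ∧
    (∀ (f f' : Equiv.Perm ℝ) (n n' : ℤ), InD N f → InD N f' →
      (f * x₀ ^ (-n)) * (f' * x₀ ^ (-n')) =
        (f * (x₀ ^ (-n) * f' * x₀ ^ n)) * x₀ ^ (-(n + n'))) := by
  obtain ⟨θ₁, hθ₁, hx₁⟩ := h1
  have hNpos : (0:ℝ) < N := hNRpos hN
  have hN1 : (1:ℝ) < N := hNR1 hN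
  have hpow := x0_pow_formula hN x₀ hθ₁ hx₁
  -- a uniqueness key
  have hkey : ∀ (f₁ f₂ : Equiv.Perm ℝ) (n₁ n₂ : ℤ), InD N f₁ → InD N f₂ →
      f₁ * x₀ ^ (-n₁) = f₂ * x₀ ^ (-n₂) → f₁ = f₂ ∧ n₁ = n₂ := by
    intro f₁ f₂ n₁ n₂ hf₁ hf₂ heq
    obtain ⟨_, δ₁, hδ₁0, hδ₁1, hid₁⟩ := hf₁
    obtain ⟨_, δ₂, hδ₂0, hδ₂1, hid₂⟩ := hf₂
    have hc : f₂⁻¹ * f₁ = x₀ ^ (n₁ - n₂) := by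
      calc f₂⁻¹ * f₁ = f₂⁻¹ * ((f₁ * x₀ ^ (-n₁)) * x₀ ^ n₁) := by group
        _ = f₂⁻¹ * ((f₂ * x₀ ^ (-n₂)) * x₀ ^ n₁) := by rw [heq]
        _ = x₀ ^ (n₁ - n₂) := by group
    obtain ⟨θk, hθk, hfk⟩ := hpow (n₁ - n₂)
    set x : ℝ := (max (max δ₁ δ₂) θk + 1) / 2 with hxdef
    have hxlt : max (max δ₁ δ₂) θk < x := by
      rw [hxdef]
      have : max (max δ₁ δ₂) θk < 1 := max_lt (max_lt hδ₁1 hδ₂1) hθk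
      linarith
    have hx1 : x < 1 := by
      rw [hxdef]
      have : max (max δ₁ δ₂) θk < 1 := max_lt (max_lt hδ₁1 hδ₂1) hθk
      linarith
    have hxδ₁ : δ₁ ≤ x := le_of_lt (lt_of_le_of_lt (le_trans (le_max_left _ _) (le_max_left _ _)) hxlt)
    have hxδ₂ : δ₂ ≤ x := le_of_lt (lt_of_le_of_lt (le_trans (le_max_right _ _) (le_max_left _ _)) hxlt)
    have hxθk : θk ≤ x := le_of_lt (lt_of_le_of_lt (le_max_right _ _) hxlt)
    have hval : (x₀ ^ (n₁ - n₂)) x = x := by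
      rw [← hc]
      show f₂⁻¹ (f₁ x) = x
      rw [hid₁ x ⟨hxδ₁, le_of_lt hx1⟩]
      have h2 : f₂ x = x := hid₂ x ⟨hxδ₂, le_of_lt hx1⟩
      have : f₂⁻¹ (f₂ x) = x := by simp
      rwa [h2] at this
    have hval2 : (N:ℝ) ^ (n₁ - n₂) * (x - 1) + 1 = x := by
      rw [← hfk x ⟨hxθk, le_of_lt hx1⟩, hval]
    have hNk : (N:ℝ) ^ (n₁ - n₂) = 1 := by
      have hx1' : x - 1 ≠ 0 := by linarith
      field_simp at hval2
      rcases mul_eq_mul_right_iff.1 (by linarith [hval2] : (N:ℝ) ^ (n₁ - n₂) * (x - 1) = 1 * (x - 1)) with h | h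
      · linarith [h]
      · exact absurd h hx1'
    have hn : n₁ - n₂ = 0 := by
      have := zpow_right_injective₀ (a := (N:ℝ)) hNpos (ne_of_gt hN1)
      have h00 : (N:ℝ) ^ (n₁ - n₂) = (N:ℝ) ^ (0:ℤ) := by rw [hNk, zpow_zero]
      exact this h00
    have hn' : n₁ = n₂ := by omega
    refine ⟨?_, hn'⟩
    rw [hn'] at heq
    exact mul_right_cancel heq
  refine ⟨?_, ?_, ?_⟩
  · intro f n hf
    exact inFN_mul hN hf.1 (inFN_zpow hN hx₀ (-n))
  · intro g hg
    obtain ⟨M, a, ha1, hga⟩ := near_one hN hg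
    obtain ⟨θM, hθM, hfM⟩ := hpow (-M)
    set f : Equiv.Perm ℝ := g * x₀ ^ (-M) with hfdef
    have hgf : g = f * x₀ ^ (-(-M)) := by rw [hfdef]; group
    have hfInFN : InFN N f := inFN_mul hN hg (inFN_zpow hN hx₀ (-M))
    have hNM : (0:ℝ) < (N:ℝ) ^ M := zpow_pos hNpos M
    set a' : ℝ := (N:ℝ) ^ M * (a - 1) + 1 with ha'def
    have ha' : a' < 1 := by
      rw [ha'def]
      nlinarith
    set δ : ℝ := max (max θM a') (1/2) with hδdef
    have hδ0 : 0 < δ := lt_of_lt_of_le one_half_pos (le_max_right _ _)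
    have hδ1 : δ < 1 := max_lt (max_lt hθM ha') (by norm_num)
    have hfid : ∀ x ∈ Icc δ (1:ℝ), f x = x := by
      intro x hx
      have hxθM : θM ≤ x := le_trans (le_trans (le_max_left _ _) (le_max_left _ _)) hx.1
      have hxa' : a' ≤ x := le_trans (le_trans (le_max_right _ _) (le_max_left _ _)) hx.1
      have hx1 : x ≤ 1 := hx.2
      have hw : (x₀ ^ (-M)) x = (N:ℝ) ^ (-M) * (x - 1) + 1 := hfM x ⟨hxθM, hx1⟩
      have hNMinv : (0:ℝ) < (N:ℝ) ^ (-M) := zpow_pos hNpos (-M)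
      have hmul : (N:ℝ) ^ M * (N:ℝ) ^ (-M) = 1 := by
        rw [← zpow_add₀ (hNR0 hN)]
        simp
      have hwmem : (N:ℝ) ^ (-M) * (x - 1) + 1 ∈ Icc a 1 := by
        constructor
        · rw [ha'def] at hxa'
          nlinarith
        · nlinarith
      have : f x = g ((x₀ ^ (-M)) x) := rfl
      rw [this, hw, hga _ hwmem]
      nlinarith [hmul]
    refine ⟨(f, -M), ⟨⟨hfInFN, δ, hδ0, hδ1, hfid⟩, hgf⟩, ?_⟩
    rintro ⟨f', n'⟩ ⟨hf'D, hf'eq⟩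
    have := hkey f' f n' (-M) hf'D ⟨hfInFN, δ, hδ0, hδ1, hfid⟩ (by rw [← hf'eq, ← hgf])
    simp only [Prod.mk.injEq]
    exact this
  · intro f f' n n' _ _
    group
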